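/- Let G be a cubic graph containing two edges x₁x₂ and y₁y₂ (with x₁, x₂, y₁, y₂ distinct) such that G − x₁x₂ − y₁y₂ has exactly two connected components: G₁ containing x₁ and y₁, and G₂ containing x₂ and y₂. Assume x₁y₁ is not an edge of G and x₂y₂ is not an edge of G. If the squares (G₁ + x₁y₁)² and (G₂ + x₂y₂)² are both 7-colorable, then G² is 7-colorable. -/

import Mathlib

/-- The square of a graph: two distinct vertices are adjacent iff their
distance in `G` is at most 2 (adjacent, or having a common neighbor). -/
def graphSquare {V : Type*} (G : SimpleGraph V) : SimpleGraph V where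
  Adj u v := u ≠ v ∧ (G.Adj u v ∨ ∃ w, G.Adj u w ∧ G.Adj w v)
  symm := ⟨by
    rintro u v ⟨hne, h | ⟨w, h1, h2⟩⟩
    · exact ⟨hne.symm, Or.inl h.symm⟩
    · exact ⟨hne.symm, Or.inr ⟨w, h2.symm, h1.symm⟩⟩⟩
  loopless := ⟨by rintro u ⟨hne, -⟩; exact hne rfl⟩

/-- The graph `H + ab` obtained from `H` by adding the edge `a b`. -/
def addEdge {α : Type*} (H : SimpleGraph α) (a b : α) : SimpleGraph α :=
  H ⊔ SimpleGraph.fromEdgeSet {s(a, b)}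

lemma graphSquare_adj {α : Type*} (H : SimpleGraph α) (u v : α) :
    (graphSquare H).Adj u v ↔ u ≠ v ∧ (H.Adj u v ∨ ∃ w, H.Adj u w ∧ H.Adj w v) := Iff.rfl

lemma addEdge_adj {α : Type*} (H : SimpleGraph α) (a b u v : α) :
    (addEdge H a b).Adj u v ↔ H.Adj u v ∨ (s(u, v) = s(a, b) ∧ u ≠ v) := by
  simp [addEdge, SimpleGraph.fromEdgeSet_adj]

lemma exists_perm_two {T : Type*} [DecidableEq T] {a b c d : T}
    (hab : a ≠ b) (hcd : c ≠ d) :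
    ∃ σ : Equiv.Perm T, σ a = c ∧ σ b = d := by
  refine ⟨(Equiv.swap a c).trans (Equiv.swap (Equiv.swap a c b) d), ?_, ?_⟩
  · have h2 : c ≠ Equiv.swap a c b := by
      intro h
      have h3 : Equiv.swap a c a = Equiv.swap a c b := by
        rw [Equiv.swap_apply_left]; exact h
      exact hab ((Equiv.swap a c).injective h3)
    simp only [Equiv.trans_apply, Equiv.swap_apply_left]
    exact Equiv.swap_apply_of_ne_of_ne h2 hcd
  · simp only [Equiv.trans_apply, Equiv.swap_apply_left]

lemma exists_notMem_fin7 {s : Set (Fin 7)} (h : s.ncard ≤ 6) : ∃ x, x ∉ s := by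
  by_contra hc
  push_neg at hc
  have he : s = Set.univ := Set.eq_univ_of_forall hc
  rw [he, Set.ncard_univ] at h
  simp [Nat.card_eq_fintype_card] at h

lemma ncard_image_subtype_le {V : Type*} [Fintype V] {S : Set V}
    (f : S → Fin 7) (P : Set V) :
    (f '' {z : S | (z : V) ∈ P}).ncard ≤ P.ncard := by
  have h1 : (f '' {z : S | (z : V) ∈ P}).ncard ≤ ({z : S | (z : V) ∈ P}).ncard :=
    Set.ncard_image_le (Set.toFinite _)
  have h2 : ({z : S | (z : V) ∈ P}).ncard
      = ((Subtype.val '' {z : S | (z : V) ∈ P})).ncard :=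
    (Set.ncard_image_of_injective _ Subtype.val_injective).symm
  have h3 : Subtype.val '' {z : S | (z : V) ∈ P} ⊆ P := by
    rintro w ⟨z, hz, rfl⟩; exact hz
  have h4 := Set.ncard_le_ncard h3 (Set.toFinite _)
  omega

theorem colorable_square_of_two_edge_cut
    {V : Type*} [Fintype V] (G : SimpleGraph V)
    (hcubic : ∀ u : V, {w | G.Adj u w}.ncard = 3)
    (x₁ x₂ y₁ y₂ : V)
    (hdistinct : ([x₁, x₂, y₁, y₂] : List V).Pairwise (· ≠ ·))
    (hx : G.Adj x₁ x₂) (hy : G.Adj y₁ y₂)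
    (hx1y1 : ¬ G.Adj x₁ y₁) (hx2y2 : ¬ G.Adj x₂ y₂)
    (G' : SimpleGraph V) (hG' : G' = G.deleteEdges {s(x₁, x₂), s(y₁, y₂)})
    (hsep : ¬ G'.Reachable x₁ x₂)
    (hall : ∀ u : V, G'.Reachable u x₁ ∨ G'.Reachable u x₂)
    (hy1 : G'.Reachable y₁ x₁) (hy2 : G'.Reachable y₂ x₂)
    (h1 : (graphSquare (addEdge (G'.induce {u | G'.Reachable u x₁})
        ⟨x₁, SimpleGraph.Reachable.refl x₁⟩ ⟨y₁, hy1⟩)).Colorable 7)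
    (h2 : (graphSquare (addEdge (G'.induce {u | G'.Reachable u x₂})
        ⟨x₂, SimpleGraph.Reachable.refl x₂⟩ ⟨y₂, hy2⟩)).Colorable 7) :
    (graphSquare G).Colorable 7 := by
  classical
  -- distinctness
  simp only [List.pairwise_cons, List.mem_cons, List.mem_singleton,
    List.not_mem_nil, List.Pairwise.nil, forall_eq_or_imp, forall_eq,
    List.mem_nil_iff, false_imp_iff, and_true, true_and] at hdistinct
  obtain ⟨⟨hd12, hd13, hd14⟩, ⟨hd23, hd24⟩, hd34⟩ := hdistinct
  replace hd14 : x₁ ≠ y₂ := hd14.1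
  replace hd24 : x₂ ≠ y₂ := hd24.1
  replace hd34 : y₁ ≠ y₂ := hd34.1.1
  -- basic adjacency facts about G'
  have hG'adj : ∀ {a b : V}, G'.Adj a b ↔
      G.Adj a b ∧ ¬ s(a,b) = s(x₁,x₂) ∧ ¬ s(a,b) = s(y₁,y₂) := by
    intro a b
    rw [hG', SimpleGraph.deleteEdges_adj]
    simp [not_or]
  have hGA : ∀ {a b : V}, G'.Adj a b → G.Adj a b := fun h => (hG'adj.mp h).1
  have hnx12 : ¬ G'.Adj x₁ x₂ := fun h => (hG'adj.mp h).2.1 rfl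
  have hny12 : ¬ G'.Adj y₁ y₂ := fun h => (hG'adj.mp h).2.2 rfl
  have hnx21 : ¬ G'.Adj x₂ x₁ := fun h => hnx12 h.symm
  have hny21 : ¬ G'.Adj y₂ y₁ := fun h => hny12 h.symm
  -- cut-edge characterizations
  have hcut : ∀ {a b : V}, G.Adj a b → G'.Reachable a x₁ → ¬ G'.Reachable b x₁ →
      (a = x₁ ∧ b = x₂) ∨ (a = y₁ ∧ b = y₂) := by
    intro a b hab ha hb
    by_cases e1 : s(a,b) = s(x₁,x₂)
    · rw [Sym2.eq_iff] at e1
      rcases e1 with ⟨rfl, rfl⟩ | ⟨rfl, rfl⟩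
      · exact Or.inl ⟨rfl, rfl⟩
      · exact absurd ha.symm hsep
    · by_cases e2 : s(a,b) = s(y₁,y₂)
      · rw [Sym2.eq_iff] at e2
        rcases e2 with ⟨rfl, rfl⟩ | ⟨rfl, rfl⟩
        · exact Or.inr ⟨rfl, rfl⟩
        · exact absurd (ha.symm.trans hy2) hsep
      · have hadj : G'.Adj a b := hG'adj.mpr ⟨hab, e1, e2⟩
        exact absurd (hadj.symm.reachable.trans ha) hb
  have hcut₂ : ∀ {a b : V}, G.Adj a b → G'.Reachable a x₂ → ¬ G'.Reachable b x₂ →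
      (a = x₂ ∧ b = x₁) ∨ (a = y₂ ∧ b = y₁) := by
    intro a b hab ha hb
    by_cases e1 : s(a,b) = s(x₁,x₂)
    · rw [Sym2.eq_iff] at e1
      rcases e1 with ⟨rfl, rfl⟩ | ⟨rfl, rfl⟩
      · exact absurd ha hsep
      · exact Or.inl ⟨rfl, rfl⟩
    · by_cases e2 : s(a,b) = s(y₁,y₂)
      · rw [Sym2.eq_iff] at e2
        rcases e2 with ⟨rfl, rfl⟩ | ⟨rfl, rfl⟩
        · exact absurd (hy1.symm.trans ha) hsep
        · exact Or.inr ⟨rfl, rfl⟩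
      · have hadj : G'.Adj a b := hG'adj.mpr ⟨hab, e1, e2⟩
        exact absurd (hadj.symm.reachable.trans ha) hb
  have hin₁ : ∀ {a b : V}, G.Adj a b → G'.Reachable a x₁ → G'.Reachable b x₁ →
      G'.Adj a b := by
    intro a b hab ha hb
    refine hG'adj.mpr ⟨hab, ?_, ?_⟩
    · intro e1
      rw [Sym2.eq_iff] at e1
      rcases e1 with ⟨rfl, rfl⟩ | ⟨rfl, rfl⟩
      · exact hsep hb.symm
      · exact hsep ha.symm
    · intro e2
      rw [Sym2.eq_iff] at e2
      rcases e2 with ⟨rfl, rfl⟩ | ⟨rfl, rfl⟩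
      · exact hsep (hb.symm.trans hy2)
      · exact hsep (ha.symm.trans hy2)
  have hin₂ : ∀ {a b : V}, G.Adj a b → G'.Reachable a x₂ → G'.Reachable b x₂ →
      G'.Adj a b := by
    intro a b hab ha hb
    refine hG'adj.mpr ⟨hab, ?_, ?_⟩
    · intro e1
      rw [Sym2.eq_iff] at e1
      rcases e1 with ⟨rfl, rfl⟩ | ⟨rfl, rfl⟩
      · exact hsep ha
      · exact hsep hb
    · intro e2
      rw [Sym2.eq_iff] at e2
      rcases e2 with ⟨rfl, rfl⟩ | ⟨rfl, rfl⟩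
      · exact hsep (hy1.symm.trans ha)
      · exact hsep (hy1.symm.trans hb)
  -- colorings
  obtain ⟨c₁⟩ := h1
  obtain ⟨c₂⟩ := h2
  set T₁ : Set V := {u | G'.Reachable u x₁} with hT₁
  set T₂ : Set V := {u | G'.Reachable u x₂} with hT₂
  set H₁ : SimpleGraph T₁ :=
    addEdge (G'.induce T₁) ⟨x₁, SimpleGraph.Reachable.refl x₁⟩ ⟨y₁, hy1⟩ with hH₁
  set H₂ : SimpleGraph T₂ :=
    addEdge (G'.induce T₂) ⟨x₂, SimpleGraph.Reachable.refl x₂⟩ ⟨y₂, hy2⟩ with hH₂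
  have hx1T : x₁ ∈ T₁ := SimpleGraph.Reachable.refl x₁
  have hy1T : y₁ ∈ T₁ := hy1
  have hx2T : x₂ ∈ T₂ := SimpleGraph.Reachable.refl x₂
  have hy2T : y₂ ∈ T₂ := hy2
  -- adjacency in H₁, H₂
  have hA₁ : ∀ {a b : T₁}, G'.Adj a.1 b.1 → H₁.Adj a b := by
    intro a b h
    rw [hH₁]
    exact (SimpleGraph.sup_adj _ _ _ _).mpr (Or.inl h)
  have hA₂ : ∀ {a b : T₂}, G'.Adj a.1 b.1 → H₂.Adj a b := by
    intro a b h
    rw [hH₂]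
    exact (SimpleGraph.sup_adj _ _ _ _).mpr (Or.inl h)
  have hA₁xy : H₁.Adj ⟨x₁, hx1T⟩ ⟨y₁, hy1T⟩ := by
    rw [hH₁, addEdge_adj]
    exact Or.inr ⟨rfl, fun h => hd13 (congrArg Subtype.val h)⟩
  have hA₂xy : H₂.Adj ⟨x₂, hx2T⟩ ⟨y₂, hy2T⟩ := by
    rw [hH₂, addEdge_adj]
    exact Or.inr ⟨rfl, fun h => hd24 (congrArg Subtype.val h)⟩
  -- coloring validity helpers
  have hV₁ : ∀ {a b : T₁}, (a : V) ≠ (b : V) →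
      (H₁.Adj a b ∨ ∃ w, H₁.Adj a w ∧ H₁.Adj w b) → c₁ a ≠ c₁ b := by
    intro a b hne h
    exact c₁.valid ((graphSquare_adj _ _ _).mpr
      ⟨fun he => hne (congrArg Subtype.val he), h⟩)
  have hV₂ : ∀ {a b : T₂}, (a : V) ≠ (b : V) →
      (H₂.Adj a b ∨ ∃ w, H₂.Adj a w ∧ H₂.Adj w b) → c₂ a ≠ c₂ b := by
    intro a b hne h
    exact c₂.valid ((graphSquare_adj _ _ _).mpr
      ⟨fun he => hne (congrArg Subtype.val he), h⟩)
  -- key colors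
  set ax := c₁ ⟨x₁, hx1T⟩ with hax
  set ay := c₁ ⟨y₁, hy1T⟩ with hay
  set cα := c₂ ⟨x₂, hx2T⟩ with hcα
  set cβ := c₂ ⟨y₂, hy2T⟩ with hcβ
  have haxay : ax ≠ ay := hV₁ hd13 (Or.inl hA₁xy)
  have hαβ : cα ≠ cβ := hV₂ hd24 (Or.inl hA₂xy)
  -- neighbor color sets
  set NA : Set (Fin 7) := c₁ '' {z : T₁ | (z : V) ∈ {w | G'.Adj x₁ w}} with hNA
  set NC : Set (Fin 7) := c₁ '' {z : T₁ | (z : V) ∈ {w | G'.Adj y₁ w}} with hNC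
  set NB : Set (Fin 7) := c₂ '' {z : T₂ | (z : V) ∈ {w | G'.Adj x₂ w}} with hNB
  set ND : Set (Fin 7) := c₂ '' {z : T₂ | (z : V) ∈ {w | G'.Adj y₂ w}} with hND
  -- degree bounds
  have hdeg : ∀ a b : V, G.Adj a b → ¬ G'.Adj a b → {w | G'.Adj a w}.ncard ≤ 2 := by
    intro a b hab hnadj
    have hsub : {w | G'.Adj a w} ⊆ {w | G.Adj a w} \ {b} := by
      intro w hw
      refine ⟨hGA hw, ?_⟩
      intro hwb
      rw [Set.mem_singleton_iff] at hwb
      subst hwb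
      exact hnadj hw
    have h1 := Set.ncard_le_ncard hsub (Set.toFinite _)
    have h2 : ({w | G.Adj a w} \ {b}).ncard = {w | G.Adj a w}.ncard - 1 :=
      Set.ncard_diff_singleton_of_mem hab
    have h3 := hcubic a
    omega
  have hNAc : NA.ncard ≤ 2 :=
    (ncard_image_subtype_le c₁ _).trans (hdeg x₁ x₂ hx hnx12)
  have hNCc : NC.ncard ≤ 2 :=
    (ncard_image_subtype_le c₁ _).trans (hdeg y₁ y₂ hy hny12)
  have hNBc : NB.ncard ≤ 2 :=
    (ncard_image_subtype_le c₂ _).trans (hdeg x₂ x₁ hx.symm hnx21)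
  have hNDc : ND.ncard ≤ 2 :=
    (ncard_image_subtype_le c₂ _).trans (hdeg y₂ y₁ hy.symm hny21)
  -- choose p
  obtain ⟨p, hp⟩ : ∃ p, p ∉ NA ∪ {ax, ay} := by
    apply exists_notMem_fin7
    have h1 := Set.ncard_union_le NA {ax, ay}
    have h2 := Set.ncard_insert_le ax ({ay} : Set (Fin 7))
    have h3 : ({ay} : Set (Fin 7)).ncard = 1 := Set.ncard_singleton ay
    omega
  simp only [Set.mem_union, Set.mem_insert_iff, Set.mem_singleton_iff, not_or] at hp
  obtain ⟨hpNA, hpax, hpay⟩ := hp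
  -- choose q
  obtain ⟨q, hq⟩ : ∃ q, q ∉ NC ∪ {ax, ay, p} := by
    apply exists_notMem_fin7
    have h1 := Set.ncard_union_le NC {ax, ay, p}
    have h2 := Set.ncard_insert_le ax ({ay, p} : Set (Fin 7))
    have h3 := Set.ncard_insert_le ay ({p} : Set (Fin 7))
    have h4 : ({p} : Set (Fin 7)).ncard = 1 := Set.ncard_singleton p
    omega
  simp only [Set.mem_union, Set.mem_insert_iff, Set.mem_singleton_iff, not_or] at hq
  obtain ⟨hqNC, hqax, hqay, hqp⟩ := hq
  -- base permutation
  obtain ⟨σ₀, hσ₀α, hσ₀β⟩ := exists_perm_two hαβ (fun h : p = q => hqp h.symm)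
  -- choose s
  obtain ⟨s, hs⟩ : ∃ s, s ∉ (⇑σ₀ '' NB) ∪ {p, q, ax} := by
    apply exists_notMem_fin7
    have h0 : (⇑σ₀ '' NB).ncard = NB.ncard := Set.ncard_image_of_injective _ σ₀.injective
    have h1 := Set.ncard_union_le (⇑σ₀ '' NB) {p, q, ax}
    have h2 := Set.ncard_insert_le p ({q, ax} : Set (Fin 7))
    have h3 := Set.ncard_insert_le q ({ax} : Set (Fin 7))
    have h4 : ({ax} : Set (Fin 7)).ncard = 1 := Set.ncard_singleton ax
    omega
  simp only [Set.mem_union, Set.mem_insert_iff, Set.mem_singleton_iff, not_or] at hs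
  obtain ⟨hsNB, hsp, hsq, hsax⟩ := hs
  -- choose t
  obtain ⟨t, ht⟩ : ∃ t, t ∉ (⇑σ₀ '' ND) ∪ {p, q, ax, s} := by
    apply exists_notMem_fin7
    have h0 : (⇑σ₀ '' ND).ncard = ND.ncard := Set.ncard_image_of_injective _ σ₀.injective
    have h1 := Set.ncard_union_le (⇑σ₀ '' ND) {p, q, ax, s}
    have h2 := Set.ncard_insert_le p ({q, ax, s} : Set (Fin 7))
    have h3 := Set.ncard_insert_le q ({ax, s} : Set (Fin 7))
    have h4 := Set.ncard_insert_le ax ({s} : Set (Fin 7))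
    have h5 : ({s} : Set (Fin 7)).ncard = 1 := Set.ncard_singleton s
    omega
  simp only [Set.mem_union, Set.mem_insert_iff, Set.mem_singleton_iff, not_or] at ht
  obtain ⟨htND, htp, htq, htax, hts⟩ := ht
  -- the adjustment permutation and final permutation
  set τ : Equiv.Perm (Fin 7) := (Equiv.swap ax s).trans (Equiv.swap ay t) with hτ
  set σ : Equiv.Perm (Fin 7) := σ₀.trans τ with hσ
  have hτp : τ p = p := by
    rw [hτ]
    simp only [Equiv.trans_apply]
    rw [Equiv.swap_apply_of_ne_of_ne hpax (fun h => hsp h.symm),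
      Equiv.swap_apply_of_ne_of_ne hpay (fun h => htp h.symm)]
  have hτq : τ q = q := by
    rw [hτ]
    simp only [Equiv.trans_apply]
    rw [Equiv.swap_apply_of_ne_of_ne hqax (fun h => hsq h.symm),
      Equiv.swap_apply_of_ne_of_ne hqay (fun h => htq h.symm)]
  have hσapp : ∀ z, σ z = τ (σ₀ z) := fun z => rfl
  have hσα : σ cα = p := by rw [hσapp, hσ₀α, hτp]
  have hσβ : σ cβ = q := by rw [hσapp, hσ₀β, hτq]
  have hτinvx : ∀ z, τ z = ax → z = s := by
    intro z hz
    have hz' : z = τ.symm ax := by rw [← hz, Equiv.symm_apply_apply]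
    rw [hz', hτ]
    simp only [Equiv.symm_trans_apply, Equiv.symm_swap]
    rw [Equiv.swap_apply_of_ne_of_ne haxay (fun h => htax h.symm),
      Equiv.swap_apply_left]
  have hτinvy : ∀ z, τ z = ay → z = t := by
    intro z hz
    have hz' : z = τ.symm ay := by rw [← hz, Equiv.symm_apply_apply]
    rw [hz', hτ]
    simp only [Equiv.symm_trans_apply, Equiv.symm_swap]
    rw [Equiv.swap_apply_left, Equiv.swap_apply_of_ne_of_ne htax hts]
  -- the glued coloring
  set F : V → Fin 7 := fun u =>
    if h : G'.Reachable u x₁ then c₁ ⟨u, h⟩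
    else σ (c₂ ⟨u, (hall u).resolve_left h⟩) with hF
  have hFm₁ : ∀ (u : V) (h : G'.Reachable u x₁), F u = c₁ ⟨u, h⟩ := by
    intro u h
    rw [hF]
    exact dif_pos h
  have hFm₂ : ∀ (u : V) (h : ¬ G'.Reachable u x₁) (h2 : G'.Reachable u x₂),
      F u = σ (c₂ ⟨u, h2⟩) := by
    intro u h h2
    rw [hF]
    exact dif_neg h
  -- cross case
  have cross : ∀ u v : V, G'.Reachable u x₁ → ¬ G'.Reachable v x₁ →
      (graphSquare G).Adj u v → F u ≠ F v := by
    intro u v hu hv hadj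
    obtain ⟨hne, hor⟩ := hadj
    have hv₂ : G'.Reachable v x₂ := (hall v).resolve_left hv
    rw [hFm₁ u hu, hFm₂ v hv hv₂]
    rcases hor with h | ⟨w, huw, hwv⟩
    · rcases hcut h hu hv with ⟨rfl, rfl⟩ | ⟨rfl, rfl⟩
      · have e1 : c₁ ⟨u, hu⟩ = ax := rfl
        have e2 : c₂ ⟨v, hv₂⟩ = cα := rfl
        rw [e1, e2, hσα]
        exact fun h' => hpax h'.symm
      · have e1 : c₁ ⟨u, hu⟩ = ay := rfl
        have e2 : c₂ ⟨v, hv₂⟩ = cβ := rfl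
        rw [e1, e2, hσβ]
        exact fun h' => hqay h'.symm
    · by_cases hw : G'.Reachable w x₁
      · rcases hcut hwv hw hv with ⟨rfl, rfl⟩ | ⟨rfl, rfl⟩
        · have h' : G'.Adj w u := (hin₁ huw hu hw).symm
          have hmem : c₁ ⟨u, hu⟩ ∈ NA := ⟨⟨u, hu⟩, h', rfl⟩
          have e2 : c₂ ⟨v, hv₂⟩ = cα := rfl
          rw [e2, hσα]
          intro hEq
          exact hpNA (hEq ▸ hmem)
        · have h' : G'.Adj w u := (hin₁ huw hu hw).symm
          have hmem : c₁ ⟨u, hu⟩ ∈ NC := ⟨⟨u, hu⟩, h', rfl⟩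
          have e2 : c₂ ⟨v, hv₂⟩ = cβ := rfl
          rw [e2, hσβ]
          intro hEq
          exact hqNC (hEq ▸ hmem)
      · rcases hcut huw hu hw with ⟨rfl, rfl⟩ | ⟨rfl, rfl⟩
        · have h' : G'.Adj w v := hin₂ hwv (SimpleGraph.Reachable.refl w) hv₂
          have hmem : σ₀ (c₂ ⟨v, hv₂⟩) ∈ ⇑σ₀ '' NB :=
            ⟨c₂ ⟨v, hv₂⟩, ⟨⟨v, hv₂⟩, h', rfl⟩, rfl⟩
          have e1 : c₁ ⟨u, hu⟩ = ax := rfl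
          rw [e1]
          intro hEq
          have hEq' : τ (σ₀ (c₂ ⟨v, hv₂⟩)) = ax := by
            rw [← hσapp]; exact hEq.symm
          have hss := hτinvx _ hEq'
          exact hsNB (hss ▸ hmem)
        · have h' : G'.Adj w v := hin₂ hwv hy2 hv₂
          have hmem : σ₀ (c₂ ⟨v, hv₂⟩) ∈ ⇑σ₀ '' ND :=
            ⟨c₂ ⟨v, hv₂⟩, ⟨⟨v, hv₂⟩, h', rfl⟩, rfl⟩
          have e1 : c₁ ⟨u, hu⟩ = ay := rfl
          rw [e1]
          intro hEq
          have hEq' : τ (σ₀ (c₂ ⟨v, hv₂⟩)) = ay := by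
            rw [← hσapp]; exact hEq.symm
          have hss := hτinvy _ hEq'
          exact htND (hss ▸ hmem)
  -- inner case 1
  have inner₁ : ∀ u v : V, G'.Reachable u x₁ → G'.Reachable v x₁ →
      (graphSquare G).Adj u v → F u ≠ F v := by
    intro u v hu hv hadj
    obtain ⟨hne, hor⟩ := hadj
    rw [hFm₁ u hu, hFm₁ v hv]
    refine hV₁ hne ?_
    rcases hor with h | ⟨w, huw, hwv⟩
    · exact Or.inl (hA₁ (hin₁ h hu hv))
    · by_cases hw : G'.Reachable w x₁
      · exact Or.inr ⟨⟨w, hw⟩, hA₁ (hin₁ huw hu hw), hA₁ (hin₁ hwv hw hv)⟩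
      · exfalso
        rcases hcut huw hu hw with ⟨rfl, rfl⟩ | ⟨rfl, rfl⟩ <;>
          rcases hcut hwv.symm hv hw with ⟨h1, h2⟩ | ⟨h1, h2⟩
        · exact hne h1.symm
        · exact hd24 h2
        · exact hd24 h2.symm
        · exact hne h1.symm
  -- inner case 2
  have inner₂ : ∀ u v : V, ¬ G'.Reachable u x₁ → ¬ G'.Reachable v x₁ →
      (graphSquare G).Adj u v → F u ≠ F v := by
    intro u v hu hv hadj
    obtain ⟨hne, hor⟩ := hadj
    have hu₂ : G'.Reachable u x₂ := (hall u).resolve_left hu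
    have hv₂ : G'.Reachable v x₂ := (hall v).resolve_left hv
    rw [hFm₂ u hu hu₂, hFm₂ v hv hv₂]
    have hc : c₂ ⟨u, hu₂⟩ ≠ c₂ ⟨v, hv₂⟩ := by
      refine hV₂ hne ?_
      rcases hor with h | ⟨w, huw, hwv⟩
      · exact Or.inl (hA₂ (hin₂ h hu₂ hv₂))
      · by_cases hw : G'.Reachable w x₂
        · exact Or.inr ⟨⟨w, hw⟩, hA₂ (hin₂ huw hu₂ hw), hA₂ (hin₂ hwv hw hv₂)⟩
        · exfalso
          rcases hcut₂ huw hu₂ hw with ⟨rfl, rfl⟩ | ⟨rfl, rfl⟩ <;>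
            rcases hcut₂ hwv.symm hv₂ hw with ⟨h1, h2⟩ | ⟨h1, h2⟩
          · exact hne h1.symm
          · exact hd13 h2
          · exact hd13 h2.symm
          · exact hne h1.symm
    exact fun h => hc (σ.injective h)
  refine ⟨SimpleGraph.Coloring.mk F ?_⟩
  intro u v hadj
  by_cases hu : G'.Reachable u x₁ <;> by_cases hv : G'.Reachable v x₁
  · exact inner₁ u v hu hv hadj
  · exact cross u v hu hv hadj
  · exact (cross v u hv hu hadj.symm).symm
  · exact inner₂ u v hu hv hadj
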